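/- Let V be the Verma module over the twisted Heisenberg-Virasoro algebra with c_I = 0, c_{L,I} ≠ 0, and h_I/c_{L,I} - 1 = -p with p ∈ ℤ_{>0}. If Λ = ∑_{i=0}^{p-1} x_i L(i-p)v + x_p v (with x_0 = 1 and x_i ∈ ℂ[I(-1),...,I(-i)] of degree -i) is a singular vector of weight p, then x_i = S_i(I(-1)/c_{L,I}, ..., I(-i)/c_{L,I}) for i = 1, ..., p-1. -/

import Mathlib

/-- The Schur polynomials `S_r(x_1, x_2, ...)`, defined as the coefficients of the
generating function `exp (∑_{n ≥ 1} (x_n/n) y^n) = ∑_{r ≥ 0} S_r y^r`.  Since the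
series `g = ∑_{n ≥ 1} (x_n/n) y^n` has zero constant term, the coefficient of `y^r`
in `exp g = ∑_k g^k / k!` only receives contributions from `k ≤ r`. -/
noncomputable def schur {A : Type*} [Ring A] [Algebra ℂ A] (x : ℕ → A) (r : ℕ) : A :=
  ∑ k ∈ Finset.range (r + 1),
    ((Nat.factorial k : ℂ)⁻¹) •
      (PowerSeries.coeff r
        ((PowerSeries.mk fun n => if n = 0 then 0 else ((n : ℂ)⁻¹) • x n) ^ k))

/-- The generalized binomial coefficient `binom(z, r) = z(z-1)⋯(z-r+1)/r!`. -/
noncomputable def cchoose (z : ℂ) (r : ℕ) : ℂ :=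
  (∏ i ∈ Finset.range r, (z - i)) / (Nat.factorial r)


/-- A representation of the twisted Heisenberg-Virasoro algebra `HVir` at level zero
(`C_I` acts by `0`), with the central elements `C_L`, `C_{LI}` acting by the scalars
`cL`, `cLI`. -/
structure HVirRep (V : Type*) [AddCommGroup V] [Module ℂ V] where
  L : ℤ → Module.End ℂ V
  I : ℤ → Module.End ℂ V
  cL : ℂ
  cLI : ℂ
  rel_LL : ∀ n m : ℤ, L n * L m - L m * L n =
    ((n : ℂ) - m) • L (n + m) +
      (if n + m = 0 then (((n : ℂ) ^ 3 - n) / 12) * cL else 0) • (1 : Module.End ℂ V)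
  rel_LI : ∀ n m : ℤ, L n * I m - I m * L n =
    (-(m : ℂ)) • I (n + m) -
      (if n + m = 0 then ((n : ℂ) ^ 2 + n) * cLI else 0) • (1 : Module.End ℂ V)
  rel_II : ∀ n m : ℤ, I n * I m = I m * I n

/-- The action of the monomial `∏_j I(-j-1)^{m(j)}` (an element of the commutative
algebra `ℂ[I(-1), I(-2), …]`, encoded by the finitely supported exponent function
`m : ℕ →₀ ℕ`, with the variable of index `j` standing for `I(-j-1)`). -/
noncomputable def monAct {V : Type*} [AddCommGroup V] [Module ℂ V]
    (I : ℤ → Module.End ℂ V) (m : ℕ →₀ ℕ) : Module.End ℂ V :=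
  ((m.support.sort (· ≤ ·)).map fun (j : ℕ) => I (-(j : ℤ) - 1) ^ m j).prod

/-- The action of a polynomial `q ∈ ℂ[I(-1), I(-2), …]` (encoded as a multivariate
polynomial whose variable of index `j` stands for `I(-j-1)`). -/
noncomputable def polyAct {V : Type*} [AddCommGroup V] [Module ℂ V]
    (I : ℤ → Module.End ℂ V) (q : MvPolynomial ℕ ℂ) : Module.End ℂ V :=
  ∑ m ∈ q.support, MvPolynomial.coeff m q • monAct I m

lemma schur_zero {A : Type*} [Ring A] [Algebra ℂ A] (x : ℕ → A) : schur x 0 = 1 := by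
  simp [schur]

lemma coeff_pow_eq_zero {A : Type*} [CommRing A] {f : PowerSeries A}
    (hf : PowerSeries.constantCoeff f = 0) :
    ∀ k r : ℕ, r < k → PowerSeries.coeff r (f ^ k) = 0 := by
  intro k
  induction k with
  | zero => omega
  | succ k ih =>
    intro r hr
    rw [pow_succ, PowerSeries.coeff_mul]
    refine Finset.sum_eq_zero fun ab hab => ?_
    rw [Finset.HasAntidiagonal.mem_antidiagonal] at hab
    rcases lt_or_ge ab.1 k with h | h
    · rw [ih ab.1 h, zero_mul]
    · have h2 : ab.2 = 0 := by omega
      rw [h2]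
      simp only [PowerSeries.coeff_zero_eq_constantCoeff, hf, mul_zero]

lemma derivativeFun_pow {A : Type*} [CommRing A] (f : PowerSeries A) :
    ∀ k : ℕ, PowerSeries.derivativeFun (f ^ (k + 1))
      = (k + 1) • (f ^ k * PowerSeries.derivativeFun f) := by
  intro k
  induction k with
  | zero => simp
  | succ k ih =>
    rw [pow_succ, PowerSeries.derivativeFun_mul, ih]
    simp only [nsmul_eq_mul, smul_eq_mul, Nat.cast_succ]
    ring

lemma schur_rec {A : Type*} [CommRing A] [Algebra ℂ A] (x : ℕ → A) (s : ℕ) :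
    ((s : ℂ) + 1) • schur x (s + 1)
      = ∑ ab ∈ Finset.HasAntidiagonal.antidiagonal s, schur x ab.1 * x (ab.2 + 1) := by
  classical
  set g : PowerSeries A :=
    PowerSeries.mk fun n => if n = 0 then 0 else ((n : ℂ)⁻¹) • x n with hgdef
  have hg0 : PowerSeries.constantCoeff g = 0 := by
    simp [hgdef]
  -- derivative coefficients
  have hdg : ∀ b : ℕ, PowerSeries.coeff b (PowerSeries.derivativeFun g) = x (b + 1) := by
    intro b
    rw [show ∀ f : PowerSeries A, PowerSeries.derivativeFun f = PowerSeries.derivative A f from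
      fun _ => rfl, PowerSeries.coeff_derivative, hgdef, PowerSeries.coeff_mk]
    rw [if_neg (Nat.succ_ne_zero b)]
    have hb : ((b : ℂ) + 1) ≠ 0 := Nat.cast_add_one_ne_zero b
    have h2 : ((b : A) + 1) = algebraMap ℂ A ((b : ℂ) + 1) := by push_cast; simp
    rw [h2, mul_comm, ← Algebra.smul_def, smul_smul]
    have h3 : ((b : ℂ) + 1) * ((((b+1:ℕ)) : ℂ))⁻¹ = 1 := by
      rw [Nat.cast_add, Nat.cast_one, mul_inv_cancel₀ hb]
    rw [h3, one_smul]
  -- scalar action as derivative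
  have hd : ∀ f : PowerSeries A, ((s : ℂ) + 1) • PowerSeries.coeff (s + 1) f
      = PowerSeries.coeff s (PowerSeries.derivativeFun f) := by
    intro f
    rw [show ∀ f : PowerSeries A, PowerSeries.derivativeFun f = PowerSeries.derivative A f from
      fun _ => rfl, PowerSeries.coeff_derivative]
    have : ((s : A) + 1) = algebraMap ℂ A ((s : ℂ) + 1) := by push_cast; simp
    rw [this, ← Algebra.commutes, ← Algebra.smul_def]
  rw [schur, Finset.smul_sum]
  have e1 : ∀ k ∈ Finset.range (s + 2),
      ((s:ℂ)+1) • ((k.factorial : ℂ)⁻¹ • PowerSeries.coeff (s+1) (g ^ k))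
        = (k.factorial : ℂ)⁻¹ • PowerSeries.coeff s (PowerSeries.derivativeFun (g ^ k)) := by
    intro k _
    rw [smul_comm, hd]
  rw [Finset.sum_congr rfl e1, Finset.sum_range_succ']
  have e0 : (Nat.factorial 0 : ℂ)⁻¹ •
      PowerSeries.coeff s (PowerSeries.derivativeFun (g ^ 0)) = 0 := by
    rw [pow_zero, PowerSeries.derivativeFun_one, map_zero, smul_zero]
  rw [e0, add_zero]
  have e2 : ∀ k ∈ Finset.range (s + 1),
      ((k+1).factorial : ℂ)⁻¹ •
        PowerSeries.coeff s (PowerSeries.derivativeFun (g ^ (k+1)))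
      = ∑ ab ∈ Finset.HasAntidiagonal.antidiagonal s,
          (k.factorial : ℂ)⁻¹ • (PowerSeries.coeff ab.1 (g ^ k) * x (ab.2 + 1)) := by
    intro k _
    rw [derivativeFun_pow, map_nsmul, ← Nat.cast_smul_eq_nsmul ℂ, smul_smul]
    have h1 : (((k+1).factorial : ℂ))⁻¹ * ((k+1 : ℕ) : ℂ) = (k.factorial : ℂ)⁻¹ := by
      have h2 : ((k+1 : ℕ) : ℂ) ≠ 0 := Nat.cast_ne_zero.mpr (Nat.succ_ne_zero k)
      have h3 : ((k.factorial : ℕ) : ℂ) ≠ 0 := Nat.cast_ne_zero.mpr k.factorial_ne_zero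
      rw [Nat.factorial_succ, Nat.cast_mul]
      field_simp
    rw [h1, PowerSeries.coeff_mul, Finset.smul_sum]
    refine Finset.sum_congr rfl fun ab _ => ?_
    rw [hdg]
  rw [Finset.sum_congr rfl e2, Finset.sum_comm]
  refine Finset.sum_congr rfl fun ab hab => ?_
  have hab1 : ab.1 ≤ s := by
    rw [Finset.HasAntidiagonal.mem_antidiagonal] at hab; omega
  have e3 : ∑ k ∈ Finset.range (s + 1),
      (k.factorial : ℂ)⁻¹ • (PowerSeries.coeff ab.1 (g ^ k) * x (ab.2 + 1))
      = (∑ k ∈ Finset.range (s + 1),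
          (k.factorial : ℂ)⁻¹ • PowerSeries.coeff ab.1 (g ^ k)) * x (ab.2 + 1) := by
    rw [Finset.sum_mul]
    exact Finset.sum_congr rfl fun k _ => (smul_mul_assoc _ _ _).symm
  rw [e3]
  congr 1
  rw [schur]
  refine (Finset.sum_subset (Finset.range_subset_range.mpr (by omega)) fun k _ hk => ?_).symm
  rw [Finset.mem_range, not_lt] at hk
  rw [coeff_pow_eq_zero hg0 k ab.1 (by omega), smul_zero]

lemma polyAct_eq_lc {V : Type*} [AddCommGroup V] [Module ℂ V]
    (I : ℤ → Module.End ℂ V) (q : MvPolynomial ℕ ℂ) :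
    polyAct I q = ((Finsupp.linearCombination ℂ (monAct I)).comp
      (AddMonoidAlgebra.coeffLinearEquiv (R := ℂ) :
        MvPolynomial ℕ ℂ ≃ₗ[ℂ] ((ℕ →₀ ℕ) →₀ ℂ)).toLinearMap) q := by
  rw [LinearMap.comp_apply, Finsupp.linearCombination_apply, Finsupp.sum]
  rfl

lemma polyAct_algHom {V : Type*} [AddCommGroup V] [Module ℂ V]
    (I : ℤ → Module.End ℂ V) (hcomm : ∀ n m : ℤ, I n * I m = I m * I n) :
    ∃ Φ : MvPolynomial ℕ ℂ →ₐ[ℂ] Module.End ℂ V,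
      (∀ q, polyAct I q = Φ q) ∧ ∀ j : ℕ, Φ (MvPolynomial.X j) = I (-(j : ℤ) - 1) := by
  classical
  set s : Set (Module.End ℂ V) := Set.range (fun j : ℕ => I (-(j : ℤ) - 1)) with hs
  have hcs : ∀ a ∈ s, ∀ b ∈ s, a * b = b * a := by
    rintro a ⟨j, rfl⟩ b ⟨j', rfl⟩
    exact hcomm _ _
  letI : CommSemiring (Algebra.adjoin ℂ s) := Algebra.adjoinCommSemiringOfComm ℂ hcs
  set g : ℕ → Algebra.adjoin ℂ s := fun j =>
    ⟨I (-(j : ℤ) - 1), Algebra.subset_adjoin ⟨j, rfl⟩⟩ with hg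
  set Φ : MvPolynomial ℕ ℂ →ₐ[ℂ] Module.End ℂ V :=
    (Algebra.adjoin ℂ s).val.comp (MvPolynomial.aeval g) with hΦ
  have key : ∀ m : ℕ →₀ ℕ, monAct I m = Φ (MvPolynomial.monomial m 1) := by
    intro m
    rw [hΦ, AlgHom.comp_apply, MvPolynomial.aeval_monomial, map_one, one_mul]
    have : (m.prod fun j e => g j ^ e : Algebra.adjoin ℂ s)
        = (((m.support.sort (· ≤ ·)).map fun j => g j ^ m j).prod) := by
      rw [Finsupp.prod, Finset.prod_eq_multiset_prod, ← Finset.sort_eq m.support (· ≤ ·),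
        Multiset.map_coe, Multiset.prod_coe]
    rw [this, map_list_prod]
    simp only [List.map_map]
    rfl
  have keym : ∀ (v : ℕ →₀ ℕ) (c : ℂ),
      polyAct I (MvPolynomial.monomial v c) = Φ (MvPolynomial.monomial v c) := by
    intro v c
    have h1 : (MvPolynomial.monomial v c : MvPolynomial ℕ ℂ)
        = c • MvPolynomial.monomial v 1 := by
      rw [MvPolynomial.smul_monomial, smul_eq_mul, mul_one]
    have pm : polyAct I (MvPolynomial.monomial v 1) = monAct I v := by
      simp [polyAct, MvPolynomial.support_monomial, MvPolynomial.coeff_monomial]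
    rw [h1, polyAct_eq_lc, map_smul, map_smul, ← polyAct_eq_lc, pm, key]
  refine ⟨Φ, fun q => ?_, fun j => ?_⟩
  · conv_lhs => rw [MvPolynomial.as_sum q]
    conv_rhs => rw [MvPolynomial.as_sum q]
    rw [polyAct_eq_lc, map_sum, map_sum]
    refine Finset.sum_congr rfl fun v _ => ?_
    rw [← polyAct_eq_lc, keym]
  · show (Algebra.adjoin ℂ s).val (MvPolynomial.aeval g (MvPolynomial.X j)) = _
    rw [MvPolynomial.aeval_X]
    rfl


/-- Uniqueness of the coefficients of a singular vector of weight `p` in the Verma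
module `V^{HVir}(c_L, 0, c_{L,I}, h, h_I)` with `h_I/c_{L,I} - 1 = -p`, `p ∈ ℤ_{>0}`
(Verma-ness of the `I`-part is encoded by injectivity of `q ↦ q·v`): if
`Λ = ∑_{i=0}^{p-1} x_i L(i-p) v + x_p v` is a singular vector, where `x_0 = 1` and
`x_i ∈ ℂ[I(-1), …, I(-i)]` is of degree `-i` (i.e. weighted homogeneous of degree `i`
where `I(-j)` has weight `j`), then
`x_i = S_i(I(-1)/c_{L,I}, …, I(-i)/c_{L,I})` for `i = 1, …, p-1`. -/
theorem singular_vector_coefficients {V : Type*} [AddCommGroup V] [Module ℂ V]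
    (ρ : HVirRep V) (v : V) (h : ℂ) (hc : ρ.cLI ≠ 0) (p : ℕ) (hp : 0 < p)
    (hLv : ∀ n : ℤ, 0 < n → ρ.L n v = 0) (hIv : ∀ n : ℤ, 0 < n → ρ.I n v = 0)
    (hL0 : ρ.L 0 v = h • v) (hI0 : ρ.I 0 v = ((1 - (p : ℂ)) * ρ.cLI) • v)
    (hinj : Function.Injective fun q : MvPolynomial ℕ ℂ => polyAct ρ.I q v)
    (x : ℕ → MvPolynomial ℕ ℂ) (hx0 : x 0 = 1)
    (hxhom : ∀ i, i ≤ p → MvPolynomial.IsWeightedHomogeneous (fun j => j + 1) (x i) i)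
    (Λ : V)
    (hΛ : Λ = (∑ i ∈ Finset.range p, polyAct ρ.I (x i) (ρ.L ((i : ℤ) - p) v)) +
      polyAct ρ.I (x p) v)
    (hsing : ∀ n : ℤ, 1 ≤ n → ρ.L n Λ = 0 ∧ ρ.I n Λ = 0) :
    ∀ i, 1 ≤ i → i ≤ p - 1 →
      x i = schur (fun j => MvPolynomial.C (ρ.cLI)⁻¹ * MvPolynomial.X (j - 1)) i := by
  classical
  obtain ⟨Φ, hΦeq, hΦX⟩ := polyAct_algHom ρ.I ρ.rel_II
  -- I n commutes with polyAct
  have hcommI : ∀ (n : ℤ) (q : MvPolynomial ℕ ℂ) (w : V),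
      ρ.I n (polyAct ρ.I q w) = polyAct ρ.I q (ρ.I n w) := by
    intro n q w
    have hcp : Commute (ρ.I n) (polyAct ρ.I q) := by
      unfold polyAct
      refine Commute.sum_right _ _ _ fun m _ => Commute.smul_right ?_ _
      unfold monAct
      refine Commute.list_prod_right _ _ fun y hy => ?_
      simp only [List.mem_map] at hy
      obtain ⟨j, _, rfl⟩ := hy
      exact Commute.pow_right (ρ.rel_II n (-(j : ℤ) - 1)) _
    calc ρ.I n (polyAct ρ.I q w) = (ρ.I n * polyAct ρ.I q) w := rfl
      _ = (polyAct ρ.I q * ρ.I n) w := by rw [hcp.eq]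
      _ = _ := rfl
  -- the key recursion coming from I(p-k) Λ = 0
  have claim : ∀ k : ℕ, 1 ≤ k → k ≤ p - 1 →
      ((k : ℂ) * ρ.cLI) • x k = ∑ i ∈ Finset.range k, x i * MvPolynomial.X (k - i - 1) := by
    intro k hk1 hk2
    have hkp : k < p := by omega
    have hn1 : (1 : ℤ) ≤ (p : ℤ) - (k : ℤ) := by omega
    have h0 := (hsing ((p : ℤ) - (k : ℤ)) hn1).2
    rw [hΛ, map_add, map_sum] at h0
    -- basic commutator computation
    have base : ∀ a : ℤ, ρ.I ((p : ℤ) - k) (ρ.L a v)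
        = ρ.L a (ρ.I ((p : ℤ) - k) v) + ((((p : ℤ) - k : ℤ) : ℂ)) • ρ.I (a + ((p : ℤ) - k)) v
          + (if a + ((p : ℤ) - k) = 0 then ((a : ℂ) ^ 2 + a) * ρ.cLI else 0) • v := by
      intro a
      have hr := ρ.rel_LI a ((p : ℤ) - k)
      have h2 := congrArg (fun f : Module.End ℂ V => f v) hr
      simp only [LinearMap.sub_apply, Module.End.mul_apply, LinearMap.smul_apply,
        LinearMap.add_apply, Module.End.one_apply] at h2
      have h3 : ρ.I ((p : ℤ) - k) (ρ.L a v)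
          = ρ.L a (ρ.I ((p : ℤ) - k) v)
            - ((-((((p : ℤ) - k : ℤ) : ℂ))) • ρ.I (a + ((p : ℤ) - k)) v
              - (if a + ((p : ℤ) - k) = 0 then ((a : ℂ) ^ 2 + a) * ρ.cLI else 0) • v) := by
        rw [← h2]; abel
      rw [h3, neg_smul]; abel
    -- compute each summand
    have hterm : ∀ i ∈ Finset.range p,
        ρ.I ((p : ℤ) - k) (polyAct ρ.I (x i) (ρ.L ((i : ℤ) - p) v))
          = if i < k then ((((p : ℤ) - k : ℤ) : ℂ)) • Φ (x i * MvPolynomial.X (k - i - 1)) v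
            else if i = k then
              (-((k : ℂ) * (((p : ℤ) - k : ℤ) : ℂ) * ρ.cLI)) • Φ (x k) v
            else 0 := by
      intro i hi
      rw [Finset.mem_range] at hi
      rw [hcommI, base, hIv _ (by omega), map_zero, zero_add]
      have ha : (i : ℤ) - p + ((p : ℤ) - k) = (i : ℤ) - k := by ring
      rw [ha]
      by_cases h1 : i < k
      · rw [if_pos h1, if_neg (by omega : ¬((i : ℤ) - k = 0)), zero_smul, add_zero, map_smul]
        congr 1
        have hX : ρ.I ((i : ℤ) - k) = Φ (MvPolynomial.X (k - i - 1)) := by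
          rw [hΦX]; congr 1; omega
        rw [hΦeq, hX, ← Module.End.mul_apply, ← map_mul]
      · by_cases h2 : i = k
        · subst h2
          rw [if_neg h1, if_pos rfl]
          rw [if_pos (by omega : (i : ℤ) - i = 0), (by omega : (i : ℤ) - i = 0), hI0]
          rw [map_add, map_smul, map_smul, map_smul, ← hΦeq]
          rw [smul_smul, ← add_smul]
          congr 1
          push_cast
          ring
        · rw [if_neg h1, if_neg h2]
          rw [hIv _ (by omega : (0:ℤ) < (i : ℤ) - k), smul_zero, zero_add]
          rw [if_neg (by omega : ¬((i : ℤ) - k = 0)), zero_smul, map_zero]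
    rw [Finset.sum_congr rfl hterm] at h0
    rw [hcommI, hIv _ (by omega), map_zero, add_zero] at h0
    -- collapse the sum
    have hsplit : ∑ i ∈ Finset.range p,
        (if i < k then ((((p : ℤ) - k : ℤ) : ℂ)) • Φ (x i * MvPolynomial.X (k - i - 1)) v
          else if i = k then
            (-((k : ℂ) * (((p : ℤ) - k : ℤ) : ℂ) * ρ.cLI)) • Φ (x k) v
          else 0)
        = (∑ i ∈ Finset.range k,
            ((((p : ℤ) - k : ℤ) : ℂ)) • Φ (x i * MvPolynomial.X (k - i - 1)) v)
          + (-((k : ℂ) * (((p : ℤ) - k : ℤ) : ℂ) * ρ.cLI)) • Φ (x k) v := by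
      rw [← Finset.sum_subset (Finset.range_subset_range.mpr (by omega : k + 1 ≤ p))
        (fun i _ hik => by
          rw [Finset.mem_range, not_lt] at hik
          rw [if_neg (by omega), if_neg (by omega)])]
      rw [Finset.sum_range_succ, if_neg (lt_irrefl k), if_pos rfl]
      congr 1
      exact Finset.sum_congr rfl fun i hi => by
        rw [if_pos (Finset.mem_range.mp hi)]
    rw [hsplit] at h0
    -- pull out the nonzero scalar
    have hfac : (∑ i ∈ Finset.range k,
          ((((p : ℤ) - k : ℤ) : ℂ)) • Φ (x i * MvPolynomial.X (k - i - 1)) v)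
          + (-((k : ℂ) * (((p : ℤ) - k : ℤ) : ℂ) * ρ.cLI)) • Φ (x k) v
        = ((((p : ℤ) - k : ℤ) : ℂ)) •
            (Φ ((∑ i ∈ Finset.range k, x i * MvPolynomial.X (k - i - 1))
              - ((k : ℂ) * ρ.cLI) • x k) v) := by
      rw [map_sub, map_sum, map_smul, LinearMap.sub_apply, LinearMap.smul_apply,
        LinearMap.sum_apply, smul_sub, Finset.smul_sum]
      rw [smul_smul, neg_smul, ← sub_eq_add_neg]
      congr 2
      ring
    rw [hfac] at h0
    have hn0 : ((((p : ℤ) - k : ℤ) : ℂ)) ≠ 0 := by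
      have : ((p : ℤ) - k) ≠ 0 := by omega
      exact_mod_cast this
    have hz := (smul_eq_zero.mp h0).resolve_left hn0
    have hpoly : (∑ i ∈ Finset.range k, x i * MvPolynomial.X (k - i - 1))
        - ((k : ℂ) * ρ.cLI) • x k = 0 := by
      apply hinj
      show polyAct ρ.I _ v = polyAct ρ.I 0 v
      rw [hΦeq, hΦeq, map_zero, hz]
      rfl
    have := sub_eq_zero.mp hpoly
    rw [← this]
  -- now the induction comparing with Schur polynomials
  set y : ℕ → MvPolynomial ℕ ℂ :=
    fun j => MvPolynomial.C (ρ.cLI)⁻¹ * MvPolynomial.X (j - 1) with hy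
  suffices H : ∀ k, k ≤ p - 1 → x k = schur y k by
    exact fun i _ h2 => H i h2
  intro k
  induction k using Nat.strong_induction_on with
  | _ k IH =>
    intro hk
    match k with
    | 0 => rw [hx0, schur_zero]
    | s + 1 =>
      have hrec := claim (s + 1) (by omega) hk
      have hrec2 : (((s + 1 : ℕ) : ℂ) * ρ.cLI) • x (s + 1)
          = ∑ i ∈ Finset.range (s + 1), schur y i * MvPolynomial.X (s - i) := by
        rw [hrec]
        refine Finset.sum_congr rfl fun i hi => ?_
        rw [Finset.mem_range] at hi
        rw [IH i (by omega) (by omega), (by omega : s + 1 - i - 1 = s - i)]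
      have hs := schur_rec y s
      rw [Finset.Nat.sum_antidiagonal_eq_sum_range_succ_mk] at hs
      have hS2 : (((s + 1 : ℕ) : ℂ) * ρ.cLI) • schur y (s + 1)
          = ∑ i ∈ Finset.range (s + 1), schur y i * MvPolynomial.X (s - i) := by
        have : (((s + 1 : ℕ) : ℂ) * ρ.cLI) • schur y (s + 1)
            = ρ.cLI • (((s : ℂ) + 1) • schur y (s + 1)) := by
          rw [smul_smul]; congr 1; push_cast; ring
        rw [this, hs, Finset.smul_sum]
        refine Finset.sum_congr rfl fun i _ => ?_
        rw [hy]
        simp only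
        rw [(by omega : s - i + 1 - 1 = s - i), MvPolynomial.smul_eq_C_mul]
        calc MvPolynomial.C ρ.cLI *
              (schur y i * (MvPolynomial.C (ρ.cLI)⁻¹ * MvPolynomial.X (s - i)))
            = (MvPolynomial.C ρ.cLI * MvPolynomial.C (ρ.cLI)⁻¹) *
              (schur y i * MvPolynomial.X (s - i)) := by ring
          _ = schur y i * MvPolynomial.X (s - i) := by
            rw [← MvPolynomial.C_mul, mul_inv_cancel₀ hc, MvPolynomial.C_1, one_mul]
      have hne : (((s + 1 : ℕ) : ℂ) * ρ.cLI) ≠ 0 :=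
        mul_ne_zero (Nat.cast_ne_zero.mpr (Nat.succ_ne_zero s)) hc
      exact smul_right_injective _ hne (hrec2.trans hS2.symm)
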